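/- For every nonzero vector v ∈ V = ℂ⁵, the radical of the symmetric bilinear form B_v, namely {α ∈ ⋀²V : B_v(α,β) = 0 for all β ∈ ⋀²V}, is equal to the subspace v∧V = {v ∧ u : u ∈ V}. In particular, the singular locus of the quadric q_v is ℙ(v∧V). -/

import Mathlib

open ExteriorAlgebra

/-- `V = ℂ⁵`. -/
abbrev V : Type := Fin 5 → ℂ

/-- The exterior algebra of `V`; its degree-`k` part `⋀[ℂ]^k V` is the `k`-th exterior power. -/
abbrev E : Type := ExteriorAlgebra ℂ V

/-! ### Auxiliary lemmas -/

lemma prod5_eq (a b c d e : V) :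
    ι ℂ a * ι ℂ b * (ι ℂ c * ι ℂ d) * ι ℂ e = ιMulti ℂ 5 ![a,b,c,d,e] := by
  simp [ιMulti_apply, List.ofFn_succ, mul_assoc]

lemma vec_comp (w : Fin 5 → V) (i j k l m : Fin 5) :
    w ∘ ![i,j,k,l,m] = ![w i, w j, w k, w l, w m] := by
  funext x; fin_cases x <;> rfl

lemma vec_swap {α : Type*} (p q k l m : α) :
    ![p,q,k,l,m] ∘ ⇑(Equiv.swap (0:Fin 5) 1) = ![q,p,k,l,m] := by
  funext x
  fin_cases x <;> simp [Equiv.swap_apply_of_ne_of_ne]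

lemma mem2 (x y : V) : ι ℂ x * ι ℂ y ∈ ⋀[ℂ]^2 V := by
  have h := ιMulti_range ℂ 2 (M := V) ⟨![x,y], rfl⟩
  simpa [ιMulti_apply, List.ofFn_succ] using h

lemma zero_of_rep (w : Fin 5 → V) (g : Fin 5 → Fin 5) (hg : ¬ Function.Injective g) :
    ιMulti ℂ 5 (w ∘ g) = 0 := by
  rw [Function.not_injective_iff] at hg
  obtain ⟨i, j, hij, hne⟩ := hg
  exact AlternatingMap.map_eq_zero_of_eq _ _ (by simp [Function.comp, hij]) hne

lemma bij_term (w : Fin 5 → V) (g : Fin 5 → Fin 5) (hg : Function.Bijective g) :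
    ∃ t : ℂ, (t = 1 ∨ t = -1) ∧ ιMulti ℂ 5 (w ∘ g) = t • ιMulti ℂ 5 w := by
  set σ := Equiv.ofBijective g hg with hσ
  have h1 : w ∘ g = w ∘ ⇑σ := rfl
  have h2 := AlternatingMap.map_perm (ιMulti ℂ 5) w σ
  refine ⟨((Equiv.Perm.sign σ : ℤ) : ℂ), ?_, ?_⟩
  · rcases Int.units_eq_one_or (Equiv.Perm.sign σ) with h | h <;> simp [h]
  · rw [h1, h2, Units.smul_def, Int.cast_smul_eq_zsmul]

lemma exists_basis (v : V) (hv : v ≠ 0) : ∃ w : Module.Basis (Fin 5) ℂ V, w 0 = v := by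
  have hli : LinearIndepOn ℂ id ({v} : Set V) := (linearIndepOn_singleton_iff ℂ).2 hv
  let b := Module.Basis.extend hli
  have hfin : Fintype ↑(hli.extend (Set.subset_univ _)) :=
    FiniteDimensional.fintypeBasisIndex b
  have hcard : Fintype.card ↑(hli.extend (Set.subset_univ _)) = 5 := by
    have h1 := Module.finrank_eq_card_basis b
    simpa using h1.symm
  have hmem : v ∈ hli.extend (Set.subset_univ _) := hli.subset_extend _ rfl
  let e0 : ↑(hli.extend (Set.subset_univ _)) ≃ Fin 5 := Fintype.equivFinOfCardEq hcard
  let e : ↑(hli.extend (Set.subset_univ _)) ≃ Fin 5 :=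
    e0.trans (Equiv.swap (e0 ⟨v, hmem⟩) 0)
  refine ⟨b.reindex e, ?_⟩
  rw [Module.Basis.reindex_apply]
  have : e.symm 0 = ⟨v, hmem⟩ := by
    simp [e, Equiv.symm_apply_eq]
  rw [this]
  simp [b, Module.Basis.extend_apply_self]

lemma ι_expand (w : Module.Basis (Fin 5) ℂ V) (x : V) :
    ι ℂ x = ∑ i, w.repr x i • ι ℂ (w i) := by
  conv_lhs => rw [← Module.Basis.sum_repr w x]
  simp only [map_sum, map_smul]

lemma span2 (w : Module.Basis (Fin 5) ℂ V) (α : E) (hα : α ∈ ⋀[ℂ]^2 V) :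
    ∃ a : Fin 5 → Fin 5 → ℂ,
      α = ∑ i, ∑ j, a i j • (ι ℂ (w i) * ι ℂ (w j)) := by
  have hle : ⋀[ℂ]^2 V ≤ Submodule.span ℂ
      (Set.range fun p : Fin 5 × Fin 5 => ι ℂ (w p.1) * ι ℂ (w p.2)) := by
    rw [← ιMulti_span_fixedDegree]
    rw [Submodule.span_le]
    rintro _ ⟨y, rfl⟩
    have hy : ιMulti ℂ 2 y = ι ℂ (y 0) * ι ℂ (y 1) := by
      simp [ιMulti_apply, List.ofFn_succ, Matrix.vecTail]
    rw [hy, ι_expand w (y 0), ι_expand w (y 1), Finset.sum_mul]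
    apply Submodule.sum_mem
    intro i _
    rw [smul_mul_assoc, Finset.mul_sum]
    apply Submodule.smul_mem
    apply Submodule.sum_mem
    intro j _
    rw [mul_smul_comm]
    exact Submodule.smul_mem _ _ (Submodule.subset_span ⟨(i, j), rfl⟩)
  obtain ⟨c, hc⟩ := Submodule.mem_span_range_iff_exists_fun ℂ |>.1 (hle hα)
  refine ⟨fun i j => c (i, j), ?_⟩
  rw [← hc, Fintype.sum_prod_type]

lemma span5 (w : Module.Basis (Fin 5) ℂ V) (x : E) (hx : x ∈ ⋀[ℂ]^5 V) :
    ∃ t : ℂ, x = t • ιMulti ℂ 5 ⇑w := by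
  have hle : ⋀[ℂ]^5 V ≤ ℂ ∙ (ιMulti ℂ 5 ⇑w) := by
    rw [← ιMulti_span_fixedDegree, Submodule.span_le]
    rintro _ ⟨y, rfl⟩
    have hy : y = fun i => ∑ j, w.repr (y i) j • w j := by
      funext i; exact (Module.Basis.sum_repr w (y i)).symm
    rw [SetLike.mem_coe, hy]
    have key : ιMulti ℂ 5 (fun i => ∑ j, w.repr (y i) j • w j)
        = ∑ g ∈ Fintype.piFinset (fun _ : Fin 5 => (Finset.univ : Finset (Fin 5))),
          ιMulti ℂ 5 (fun i => w.repr (y i) (g i) • w (g i)) :=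
      MultilinearMap.map_sum_finset (ιMulti ℂ 5).toMultilinearMap _ _
    rw [key]
    apply Submodule.sum_mem
    intro g _
    have key2 : ιMulti ℂ 5 (fun i => w.repr (y i) (g i) • w (g i))
        = (∏ i, w.repr (y i) (g i)) • ιMulti ℂ 5 (⇑w ∘ g) :=
      MultilinearMap.map_smul_univ (ιMulti ℂ 5).toMultilinearMap _ _
    rw [key2]
    apply Submodule.smul_mem
    by_cases hg : Function.Bijective g
    · obtain ⟨t, _, ht⟩ := bij_term (⇑w) g hg
      rw [ht]
      exact Submodule.smul_mem _ _ (Submodule.mem_span_singleton_self _)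
    · have hinj : ¬ Function.Injective g := fun h => hg ⟨h, Finite.surjective_of_injective h⟩
      rw [zero_of_rep _ _ hinj]
      exact Submodule.zero_mem _
  obtain ⟨t, ht⟩ := Submodule.mem_span_singleton.1 (hle hx)
  exact ⟨t, ht.symm⟩

/-- expansion of `φ (α * β * ι v)` for `α` in coordinates and `β = ι w_k * ι w_l`. -/
lemma expand_eq (w : Fin 5 → V) (φ : E →ₗ[ℂ] ℂ) (a : Fin 5 → Fin 5 → ℂ) (k l : Fin 5) :
    φ ((∑ i, ∑ j, a i j • (ι ℂ (w i) * ι ℂ (w j))) * (ι ℂ (w k) * ι ℂ (w l)) * ι ℂ (w 0))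
      = ∑ i, ∑ j, a i j * φ (ιMulti ℂ 5 (w ∘ ![i,j,k,l,0])) := by
  rw [Finset.sum_mul, Finset.sum_mul, map_sum]
  refine Finset.sum_congr rfl fun i _ => ?_
  rw [Finset.sum_mul, Finset.sum_mul, map_sum]
  refine Finset.sum_congr rfl fun j _ => ?_
  rw [smul_mul_assoc, smul_mul_assoc, map_smul, smul_eq_mul, vec_comp, ← prod5_eq]

lemma sym_step (w : Fin 5 → V) (φ : E →ₗ[ℂ] ℂ) (hc : φ (ιMulti ℂ 5 w) ≠ 0)
    (a : Fin 5 → Fin 5 → ℂ) (p q k l : Fin 5) (hpq : p ≠ q)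
    (h1 : ∀ i j : Fin 5, (i, j) ≠ (p, q) → (i, j) ≠ (q, p) →
      ¬ Function.Injective ![i,j,k,l,(0:Fin 5)])
    (h2 : Function.Bijective ![p,q,k,l,(0:Fin 5)])
    (heq : ∑ i, ∑ j, a i j * φ (ιMulti ℂ 5 (w ∘ ![i,j,k,l,0])) = 0) :
    a p q = a q p := by
  have hzero : ∀ i j : Fin 5, (i, j) ≠ (p, q) → (i, j) ≠ (q, p) →
      a i j * φ (ιMulti ℂ 5 (w ∘ ![i,j,k,l,0])) = 0 := by
    intro i j hne1 hne2
    rw [zero_of_rep w _ (h1 i j hne1 hne2), map_zero, mul_zero]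
  rw [← Fintype.sum_prod_type'] at heq
  have hsub : ({(p, q), (q, p)} : Finset (Fin 5 × Fin 5)) ⊆ Finset.univ :=
    Finset.subset_univ _
  rw [← Finset.sum_subset hsub (fun x _ hx => by
    simp only [Finset.mem_insert, Finset.mem_singleton] at hx
    push_neg at hx
    exact hzero x.1 x.2 (by simpa using hx.1) (by simpa using hx.2))] at heq
  rw [Finset.sum_pair (by simp [hpq, Prod.ext_iff])] at heq
  have hswap : ιMulti ℂ 5 (w ∘ ![q,p,k,l,0]) = -(ιMulti ℂ 5 (w ∘ ![p,q,k,l,0])) := by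
    have h := AlternatingMap.map_swap (ιMulti ℂ 5) (w ∘ ![p,q,k,l,0])
      (show (0 : Fin 5) ≠ 1 by decide)
    rw [Function.comp_assoc, vec_swap] at h
    exact h
  obtain ⟨t, ht1, ht2⟩ := bij_term w _ h2
  rw [hswap, map_neg, ht2, map_smul, smul_eq_mul] at heq
  have : (a p q - a q p) * (t * φ (ιMulti ℂ 5 w)) = 0 := by
    ring_nf; ring_nf at heq; linear_combination heq
  have htne : t ≠ 0 := by rcases ht1 with h | h <;> simp [h]
  rcases mul_eq_zero.1 this with h | h
  · exact sub_eq_zero.1 h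
  · exact absurd h (mul_ne_zero htne hc)

lemma backward (v u : V) (β : E) (hβ : β ∈ ⋀[ℂ]^2 V) :
    ι ℂ v * ι ℂ u * β * ι ℂ v = 0 := by
  rw [← ιMulti_span_fixedDegree] at hβ
  induction hβ using Submodule.span_induction with
  | mem x hx =>
    obtain ⟨y, rfl⟩ := hx
    have hy : ιMulti ℂ 2 y = ι ℂ (y 0) * ι ℂ (y 1) := by
      simp [ιMulti_apply, List.ofFn_succ, Matrix.vecTail]
    rw [hy, prod5_eq]
    exact AlternatingMap.map_eq_zero_of_eq _ _
      (show ![v, u, y 0, y 1, v] 0 = ![v, u, y 0, y 1, v] 4 from rfl)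
      (by decide : (0 : Fin 5) ≠ 4)
  | zero => simp
  | add x y _ _ hx hy => rw [mul_add, add_mul, hx, hy, add_zero]
  | smul c x _ hx => rw [mul_smul_comm, smul_mul_assoc, hx, smul_zero]

lemma assemble (w : Fin 5 → V) (a : Fin 5 → Fin 5 → ℂ)
    (h12 : a 1 2 = a 2 1) (h13 : a 1 3 = a 3 1) (h14 : a 1 4 = a 4 1)
    (h23 : a 2 3 = a 3 2) (h24 : a 2 4 = a 4 2) (h34 : a 3 4 = a 4 3) :
    ∑ i, ∑ j, a i j • (ι ℂ (w i) * ι ℂ (w j)) =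
      ι ℂ (w 0) * ι ℂ (∑ j, (a 0 j - a j 0) • w j) := by
  have hsw : ∀ i j : Fin 5, ι ℂ (w j) * ι ℂ (w i) = -(ι ℂ (w i) * ι ℂ (w j)) :=
    fun i j => eq_neg_of_add_eq_zero_left (ι_add_mul_swap _ _)
  have hsq : ∀ i : Fin 5, ι (R:=ℂ) (w i) * ι ℂ (w i) = 0 := fun i => ι_sq_zero _
  rw [map_sum, Finset.mul_sum]
  simp only [map_smul, mul_smul_comm]
  simp only [Fin.sum_univ_five]
  rw [hsq 0, hsq 1, hsq 2, hsq 3, hsq 4,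
    hsw 0 1, hsw 0 2, hsw 0 3, hsw 0 4, hsw 1 2, hsw 1 3, hsw 1 4, hsw 2 3, hsw 2 4, hsw 3 4,
    ← h12, ← h13, ← h14, ← h23, ← h24, ← h34]
  module

/-- Fix a linear functional `φ` on the exterior algebra restricting to an
isomorphism `⋀⁵V ≅ ℂ`, and for `v ∈ V` let `B_v(α, β) = φ(α ∧ β ∧ v)` on `⋀²V`.  For every
nonzero `v`, the radical `{α ∈ ⋀²V : ∀ β ∈ ⋀²V, B_v(α, β) = 0}` equals the subspace
`v ∧ V = {v ∧ u : u ∈ V}`; in particular the singular locus of `q_v` is `ℙ(v ∧ V)`. -/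
theorem radical_of_Bv_eq_wedge
    (φ : E →ₗ[ℂ] ℂ)
    (hφ : Function.Bijective (φ ∘ₗ (⋀[ℂ]^5 V).subtype))
    (v : V) (hv : v ≠ 0) :
    ∀ α ∈ ⋀[ℂ]^2 V,
      ((∀ β ∈ ⋀[ℂ]^2 V, φ (α * β * ι ℂ v) = 0) ↔ ∃ u : V, α = ι ℂ v * ι ℂ u) := by
  intro α hα
  obtain ⟨w, hw0⟩ := exists_basis v hv
  -- `φ` is nonzero on the top wedge of the basis
  have hc : φ (ιMulti ℂ 5 ⇑w) ≠ 0 := by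
    obtain ⟨y, hy⟩ := hφ.2 (1 : ℂ)
    obtain ⟨t, ht⟩ := span5 w (y : E) y.2
    have : φ (y : E) = 1 := hy
    rw [ht, map_smul, smul_eq_mul] at this
    intro h0
    rw [h0, mul_zero] at this
    exact zero_ne_one this
  constructor
  · intro h
    obtain ⟨a, ha⟩ := span2 w α hα
    have key : ∀ k l : Fin 5,
        ∑ i, ∑ j, a i j * φ (ιMulti ℂ 5 (⇑w ∘ ![i,j,k,l,0])) = 0 := by
      intro k l
      rw [← expand_eq ⇑w φ a k l, ← ha, hw0]
      exact h _ (mem2 _ _)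
    have h12 := sym_step ⇑w φ hc a 1 2 3 4 (by decide) (by decide) (by decide) (key 3 4)
    have h13 := sym_step ⇑w φ hc a 1 3 2 4 (by decide) (by decide) (by decide) (key 2 4)
    have h14 := sym_step ⇑w φ hc a 1 4 2 3 (by decide) (by decide) (by decide) (key 2 3)
    have h23 := sym_step ⇑w φ hc a 2 3 1 4 (by decide) (by decide) (by decide) (key 1 4)
    have h24 := sym_step ⇑w φ hc a 2 4 1 3 (by decide) (by decide) (by decide) (key 1 3)
    have h34 := sym_step ⇑w φ hc a 3 4 1 2 (by decide) (by decide) (by decide) (key 1 2)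
    refine ⟨∑ j, (a 0 j - a j 0) • w j, ?_⟩
    rw [ha, ← hw0]
    exact assemble ⇑w a h12 h13 h14 h23 h24 h34
  · rintro ⟨u, rfl⟩ β hβ
    rw [backward v u β hβ, map_zero]
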